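/- With the sequences ε_l = ε_0/4^l and r_l as in the iteration (r_1 = r_0/8, r_{l+1} = q_{2^l}(r_l - δ_l), δ_l = δ/4^l, δ = r_0/c_1, c_1 = 4^{b+2}/3, and r_∞ := r_0/4^{b+2} a lower bound for all r_l), one has for every k ≥ 1: ∑_{l=0}^{k-1} ε_l/(r_l - r_{l+1}) ≤ (8/7)(ε_0/r_0) + (ε_0/r_∞)·2^{b/2}. -/

import Mathlib

set_option maxHeartbeats 1000000


/-- With `ε_l = ε_0/4^l` and the radii `r_l` of the iteration, for every `k ≥ 1`,
`∑_{l<k} ε_l/(r_l - r_{l+1}) ≤ (8/7)(ε_0/r_0) + (ε_0/r_∞) 2^{b/2}`. -/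
theorem stmt7 (r0 b ε0 : ℝ) (hr0 : 0 < r0) (hε0 : 0 < ε0)
    (hb : 8 + 2 * Real.log 48 / Real.log 2 ≤ b)
    (c1 δ rinf : ℝ) (hc1 : c1 = (4 : ℝ) ^ (b + 2) / 3) (hδ : δ = r0 / c1)
    (hrinf : rinf = r0 / (4 : ℝ) ^ (b + 2))
    (q : ℕ → ℝ) (hq : ∀ m : ℕ, 0 < m → q m = (m : ℝ) ^ (-(b / (m : ℝ))))
    (r : ℕ → ℝ) (hr00 : r 0 = r0) (hr1 : r 1 = r0 / 8)
    (hrec : ∀ l : ℕ, 1 ≤ l → r (l + 1) = q (2 ^ l) * (r l - δ / 4 ^ l))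
    (hlow : ∀ l : ℕ, 1 ≤ l → rinf ≤ r l) :
    ∀ k : ℕ, 1 ≤ k →
      ∑ l ∈ Finset.range k, (ε0 / 4 ^ l) / (r l - r (l + 1)) ≤
        8 / 7 * (ε0 / r0) + ε0 / rinf * (2 : ℝ) ^ (b / 2) := by
  have hlog2 : (0.6931471803 : ℝ) < Real.log 2 := Real.log_two_gt_d9
  have hlog48 : (0:ℝ) < Real.log 48 := Real.log_pos (by norm_num)
  have hb8 : (8:ℝ) ≤ b := by
    have : 0 < 2 * Real.log 48 / Real.log 2 := by positivity
    linarith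
  have hrinfpos : 0 < rinf := by rw [hrinf]; positivity
  have hδpos : 0 < δ := by rw [hδ, hc1]; positivity
  set A : ℝ := (2:ℝ) ^ (b / 2) with hA
  have hApos : 0 < A := Real.rpow_pos_of_pos two_pos _
  have key : ∀ l : ℕ, 1 ≤ l →
      (ε0 / 4 ^ l) / (r l - r (l + 1)) ≤ ε0 / rinf * A * (1/2) ^ l := by
    intro l hl
    have h2l : (0:ℝ) < 2 ^ l := by positivity
    have h4l : (0:ℝ) < 4 ^ l := by positivity
    set x : ℝ := b * l * Real.log 2 / 2 ^ l with hx
    have hlpos : (0:ℝ) < l := by exact_mod_cast hl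
    have hxpos : 0 < x := by
      apply div_pos _ h2l
      have hl2 : (0:ℝ) < Real.log 2 := by linarith
      have hbpos : (0:ℝ) < b := by linarith
      positivity
    have hq2 : q (2 ^ l) = Real.exp (-x) := by
      rw [hq (2 ^ l) (by positivity)]
      have hcast : ((2 ^ l : ℕ) : ℝ) = (2:ℝ) ^ l := by push_cast; ring
      rw [hcast, Real.rpow_def_of_pos h2l, Real.log_pow]
      congr 1
      rw [hx]
      field_simp
    have hE1 : Real.exp (-x) ≤ 1 := Real.exp_le_one_iff.mpr (by linarith)
    have hEpos : 0 < Real.exp (-x) := Real.exp_pos _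
    -- lower bound on the gap
    have hgap : x * Real.exp (-x) * rinf ≤ r l - r (l + 1) := by
      rw [hrec l hl, hq2]
      have hrl := hlow l hl
      have hδ4 : 0 < δ / 4 ^ l := by positivity
      have h2 : x * Real.exp (-x) ≤ 1 - Real.exp (-x) := by
        have hmul : Real.exp (-x) * Real.exp x = 1 := by
          rw [← Real.exp_add]; simp
        nlinarith [Real.add_one_le_exp x, hEpos]
      nlinarith [mul_nonneg hEpos.le hδ4.le]
    -- x e^{-x} ≥ 2^{-l} / A
    have h2lnat : (2:ℝ) * l ≤ 2 ^ l := by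
      have hnat : 2 * l ≤ 2 ^ l := by
        have h1 : l - 1 < 2 ^ (l - 1) := Nat.lt_two_pow_self
        calc 2 * l = 2 * (l - 1 + 1) := by omega
        _ ≤ 2 * 2 ^ (l - 1) := by omega
        _ = 2 ^ (l - 1 + 1) := by rw [pow_succ]; ring
        _ = 2 ^ l := by congr 1; omega
      exact_mod_cast hnat
    have hxle : x ≤ b / 2 * Real.log 2 := by
      rw [hx, div_le_iff₀ h2l]
      have hbl : 0 < b * Real.log 2 := by nlinarith
      nlinarith
    have hEA : A⁻¹ ≤ Real.exp (-x) := by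
      have hAeq : A = Real.exp (b / 2 * Real.log 2) := by
        rw [hA, Real.rpow_def_of_pos two_pos]
        congr 1
        ring
      rw [hAeq, ← Real.exp_neg]
      exact Real.exp_le_exp.mpr (by linarith)
    have hl1 : (1:ℝ) ≤ (l:ℝ) := by exact_mod_cast hl
    have hxge : (1:ℝ) / 2 ^ l ≤ x := by
      have hbl8 : (8:ℝ) ≤ b * ↑l := by
        have := mul_le_mul hb8 hl1 (by norm_num) (by linarith : (0:ℝ) ≤ b)
        linarith
      have h1 : (1:ℝ) ≤ b * ↑l * Real.log 2 := by
        have h2 : (8:ℝ) * 0.6931471803 ≤ b * ↑l * Real.log 2 :=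
          mul_le_mul hbl8 hlog2.le (by norm_num) (by linarith)
        linarith
      rw [hx]
      gcongr
    have hlb : rinf / (A * 2 ^ l) ≤ r l - r (l + 1) := by
      have h1 : rinf / (A * 2 ^ l) ≤ x * Real.exp (-x) * rinf := by
        have : (1:ℝ) / 2 ^ l * A⁻¹ ≤ x * Real.exp (-x) := by
          have := mul_le_mul hxge hEA (by positivity) hxpos.le
          linarith
        calc rinf / (A * 2 ^ l) = (1 / 2 ^ l * A⁻¹) * rinf := by
              rw [div_eq_mul_inv, mul_inv]; ring
        _ ≤ x * Real.exp (-x) * rinf := by nlinarith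
      linarith
    have hlbpos : 0 < rinf / (A * 2 ^ l) := by positivity
    have step : (ε0 / 4 ^ l) / (r l - r (l + 1)) ≤ (ε0 / 4 ^ l) / (rinf / (A * 2 ^ l)) := by
      gcongr
    calc (ε0 / 4 ^ l) / (r l - r (l + 1)) ≤ (ε0 / 4 ^ l) / (rinf / (A * 2 ^ l)) := step
    _ = ε0 / rinf * A * (1/2) ^ l := by
        have h42 : (4:ℝ) ^ l = 2 ^ l * 2 ^ l := by
          rw [← mul_pow]; norm_num
        rw [h42, div_pow]
        field_simp
        ring
  intro k hk
  obtain ⟨n, rfl⟩ : ∃ n, k = n + 1 := ⟨k - 1, by omega⟩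
  rw [Finset.sum_range_succ']
  have hterm0 : (ε0 / 4 ^ 0) / (r 0 - r 1) = 8 / 7 * (ε0 / r0) := by
    rw [hr00, hr1]
    have : r0 - r0 / 8 = 7 / 8 * r0 := by ring
    rw [this]
    field_simp
  have hsum : ∑ i ∈ Finset.range n, (ε0 / 4 ^ (i + 1)) / (r (i + 1) - r (i + 1 + 1)) ≤
      ε0 / rinf * A := by
    have h1 : ∑ i ∈ Finset.range n, (ε0 / 4 ^ (i + 1)) / (r (i + 1) - r (i + 1 + 1)) ≤
        ∑ i ∈ Finset.range n, (ε0 / rinf * A) * (1/2) ^ (i + 1) := by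
      apply Finset.sum_le_sum
      intro i _
      exact key (i + 1) (by omega)
    have h2 : ∑ i ∈ Finset.range n, (ε0 / rinf * A) * (1/2:ℝ) ^ (i + 1) =
        (ε0 / rinf * A) * (1/2) * ∑ i ∈ Finset.range n, (1/2:ℝ) ^ i := by
      rw [Finset.mul_sum]
      apply Finset.sum_congr rfl
      intro i _
      ring
    have h3 : ∑ i ∈ Finset.range n, (1/2:ℝ) ^ i ≤ 2 := by
      rw [geom_sum_eq (by norm_num : (1/2:ℝ) ≠ 1)]
      have hp : (0:ℝ) ≤ (1/2:ℝ) ^ n := by positivity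
      rw [div_le_iff_of_neg (by norm_num : (1/2:ℝ) - 1 < 0)]
      linarith
    have hC : (0:ℝ) ≤ ε0 / rinf * A := by positivity
    calc ∑ i ∈ Finset.range n, (ε0 / 4 ^ (i + 1)) / (r (i + 1) - r (i + 1 + 1)) ≤
        (ε0 / rinf * A) * (1/2) * ∑ i ∈ Finset.range n, (1/2:ℝ) ^ i := by
          rw [← h2]; exact h1
    _ ≤ (ε0 / rinf * A) * (1/2) * 2 := by
        apply mul_le_mul_of_nonneg_left h3; positivity
    _ = ε0 / rinf * A := by ring
  linarith [hterm0, hsum]
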